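/- Let P₀, P₁ be orthogonal projections on a complex Hilbert space H. Let Z ∈ B(H) be selfadjoint and P₀-codiagonal (P₀ Z P₀ = 0 and (1−P₀) Z (1−P₀) = 0), and let δ(t) = e^{itZ} P₀ e^{−itZ} for t ∈ [0,1] satisfy δ(1) = P₁. Assume δ is minimal in the space of orthogonal projections: ℓ_∞(δ) ≤ ℓ_∞(ρ) for every continuously differentiable curve ρ of orthogonal projections joining P₀ and P₁. Then for every continuously differentiable curve γ : [a,b] → B(H) such that each γ(t) is a partial isometry, each γ′(t) = iAγ(t) − iγ(t)B for some selfadjoint A, B, and γ(a) = P₀, γ(b) = P₁, one has ℓ(δ) ≤ ℓ(γ), where ℓ is the Finsler length built from the quotient norm on tangent vectors to partial isometries. -/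

import Mathlib

open NormedSpace Set

variable {H : Type*} [NormedAddCommGroup H] [InnerProductSpace ℂ H] [CompleteSpace H]

set_option linter.unusedSectionVars false

local notation "⟪" x ", " y "⟫" => (inner ℂ x y : ℂ)

lemma inner_proj_right (p : H →L[ℂ] H) (hsa : IsSelfAdjoint p) (x y : H) :
    ⟪x, p y⟫ = ⟪p x, y⟫ := by
  rw [← ContinuousLinearMap.adjoint_inner_left, hsa.adjoint_eq]

lemma proj_apply_norm_le (p : H →L[ℂ] H) (hsa : IsSelfAdjoint p) (h2 : p * p = p) (x : H) :
    ‖p x‖ ≤ ‖x‖ := by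
  have h1 : ⟪p x, p x⟫ = ⟪x, p x⟫ := by
    have := (inner_proj_right p hsa x (p x)).symm
    rwa [show p (p x) = p x by rw [← ContinuousLinearMap.mul_apply, h2]] at this
  have h3 : (‖p x‖ : ℝ) ^ 2 ≤ ‖x‖ * ‖p x‖ := by
    have hcs := norm_inner_le_norm (𝕜 := ℂ) x (p x)
    calc (‖p x‖ : ℝ) ^ 2 = RCLike.re ⟪p x, p x⟫ := by
          rw [← inner_self_eq_norm_sq (𝕜 := ℂ)]
      _ = RCLike.re ⟪x, p x⟫ := by rw [h1]
      _ ≤ ‖⟪x, p x⟫‖ := RCLike.re_le_norm _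
      _ ≤ ‖x‖ * ‖p x‖ := hcs
  rcases eq_or_lt_of_le (norm_nonneg (p x)) with h | h
  · rw [← h]; exact norm_nonneg x
  · nlinarith

lemma pyth_sq (a b : H) (h : ⟪a, b⟫ = 0) : ‖a + b‖ ^ 2 = ‖a‖ ^ 2 + ‖b‖ ^ 2 := by
  rw [@norm_add_sq ℂ, h]; simp

lemma proj_idem_apply (p : H →L[ℂ] H) (h2 : p * p = p) (x : H) : p (p x) = p x := by
  rw [← ContinuousLinearMap.mul_apply, h2]

lemma commutator_proj_bound (p A : H →L[ℂ] H) (hsa : IsSelfAdjoint p) (h2 : p * p = p) :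
    ‖A * p - p * A‖ ≤ ‖A‖ := by
  apply ContinuousLinearMap.opNorm_le_bound _ (norm_nonneg A)
  intro x
  have hdec : (A * p - p * A) x = (A (p x) - p (A (p x))) + (-(p (A (x - p x)))) := by
    simp only [ContinuousLinearMap.sub_apply, ContinuousLinearMap.mul_apply, map_sub]
    abel
  have horth : ⟪A (p x) - p (A (p x)), -(p (A (x - p x)))⟫ = 0 := by
    rw [inner_neg_right, inner_proj_right p hsa, map_sub, proj_idem_apply p h2, sub_self,
      inner_zero_left, neg_zero]
  have hpyth : ‖(A * p - p * A) x‖ ^ 2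
      = ‖A (p x) - p (A (p x))‖ ^ 2 + ‖p (A (x - p x))‖ ^ 2 := by
    rw [hdec, pyth_sq _ _ horth, norm_neg]
  have horth2 : ⟪p x, x - p x⟫ = 0 := by
    rw [← inner_proj_right p hsa, map_sub, proj_idem_apply p h2, sub_self, inner_zero_right]
  have hx : ‖p x‖ ^ 2 + ‖x - p x‖ ^ 2 = ‖x‖ ^ 2 := by
    have := pyth_sq (p x) (x - p x) horth2
    rw [add_sub_cancel] at this
    exact this.symm
  have h1p : IsSelfAdjoint (1 - p) := (IsSelfAdjoint.one _).sub hsa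
  have h1p2 : (1 - p) * (1 - p) = 1 - p := by
    simp only [mul_sub, sub_mul, one_mul, mul_one, h2]; abel
  have e1 : ‖A (p x) - p (A (p x))‖ ≤ ‖A (p x)‖ := by
    have := proj_apply_norm_le (1 - p) h1p h1p2 (A (p x))
    simpa using this
  have e2 : ‖p (A (x - p x))‖ ≤ ‖A (x - p x)‖ := proj_apply_norm_le p hsa h2 _
  have e3 : ‖A (p x)‖ ≤ ‖A‖ * ‖p x‖ := A.le_opNorm (p x)
  have e4 : ‖A (x - p x)‖ ≤ ‖A‖ * ‖x - p x‖ := A.le_opNorm _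
  have hsq : ‖(A * p - p * A) x‖ ^ 2 ≤ (‖A‖ * ‖x‖) ^ 2 := by
    rw [hpyth]
    have h5 : ‖A (p x) - p (A (p x))‖ ^ 2 ≤ (‖A‖ * ‖p x‖) ^ 2 := by
      nlinarith [norm_nonneg (A (p x) - p (A (p x))), norm_nonneg (A (p x))]
    have h6 : ‖p (A (x - p x))‖ ^ 2 ≤ (‖A‖ * ‖x - p x‖) ^ 2 := by
      nlinarith [norm_nonneg (p (A (x - p x))), norm_nonneg (A (x - p x))]
    nlinarith [hx, sq_nonneg ‖A‖]
  nlinarith [norm_nonneg ((A * p - p * A) x), mul_nonneg (norm_nonneg A) (norm_nonneg x)]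

lemma pisom_norm_le_one (V : H →L[ℂ] H) (hV : V * star V * V = V) : ‖V‖ ≤ 1 := by
  have hq2 : (star V * V) * (star V * V) = star V * V := by
    calc (star V * V) * (star V * V) = star V * (V * star V * V) := by noncomm_ring
      _ = star V * V := by rw [hV]
  have hqsa : IsSelfAdjoint (star V * V) := by
    rw [IsSelfAdjoint, star_mul, star_star]
  have hqn : ‖star V * V‖ ≤ 1 := by
    apply ContinuousLinearMap.opNorm_le_bound _ zero_le_one
    intro x
    rw [one_mul]
    exact proj_apply_norm_le _ hqsa hq2 x
  have := CStarRing.norm_star_mul_self (x := V)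
  nlinarith [norm_nonneg V]

/-- For any selfadjoint representation `W = i(AV - VB)` of a tangent vector,
`W V* + V W* = i(A p - p A)` with `p = V V*`. -/
lemma tangent_pform (V A B W : H →L[ℂ] H) (hA : IsSelfAdjoint A) (hB : IsSelfAdjoint B)
    (h : Complex.I • (A * V) - Complex.I • (V * B) = W) :
    W * star V + V * star W
      = Complex.I • (A * (V * star V) - (V * star V) * A) := by
  have hsW : star W = (-Complex.I) • (star V * A) - (-Complex.I) • (B * star V) := by
    rw [← h]
    simp only [star_sub, star_smul, star_mul, Complex.star_def, Complex.conj_I,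
      hA.star_eq, hB.star_eq]
  rw [hsW, ← h]
  simp only [sub_mul, mul_sub, smul_mul_assoc, mul_smul_comm, neg_smul, smul_sub, mul_neg,
    mul_assoc]
  abel

lemma proj_opNorm_le_one (p : H →L[ℂ] H) (hsa : IsSelfAdjoint p) (h2 : p * p = p) :
    ‖p‖ ≤ 1 := by
  apply ContinuousLinearMap.opNorm_le_bound _ zero_le_one
  intro x; rw [one_mul]; exact proj_apply_norm_le p hsa h2 x


lemma aux_mul3a {a n b : ℝ} (ha0 : 0 ≤ a) (hn : 0 ≤ n) (hb0 : 0 ≤ b) (ha : a ≤ 1) (hb : b ≤ 1) :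
    a * (n * b) ≤ n :=
  le_trans (mul_le_of_le_one_left (mul_nonneg hn hb0) ha) (mul_le_of_le_one_right hn hb)

lemma aux_mul3b {a n b : ℝ} (ha0 : 0 ≤ a) (hn : 0 ≤ n) (hb0 : 0 ≤ b) (ha : a ≤ 1) (hb : b ≤ 1) :
    a * n * b ≤ n :=
  le_trans (mul_le_of_le_one_right (mul_nonneg ha0 hn) hb)
    (mul_le_of_le_one_left hn ha)

lemma aux_mul4 {a n b c : ℝ} (ha0 : 0 ≤ a) (hn : 0 ≤ n) (hb0 : 0 ≤ b) (hc0 : 0 ≤ c)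
    (ha : a ≤ 1) (hb : b ≤ 1) (hc : c ≤ 1) : a * n * b * c ≤ n :=
  le_trans (mul_le_of_le_one_right (mul_nonneg (mul_nonneg ha0 hn) hb0) hc)
    (aux_mul3b ha0 hn hb0 ha hb)

/-- Repair lemma: any tangent vector `E` at a partial isometry `V` admits a selfadjoint
representation with norms controlled by `‖E‖`. -/
lemma exists_small_rep (V E A B : H →L[ℂ] H) (hV : V * star V * V = V)
    (hA : IsSelfAdjoint A) (hB : IsSelfAdjoint B)
    (h : Complex.I • (A * V) - Complex.I • (V * B) = E) :
    ∃ X Y : H →L[ℂ] H, IsSelfAdjoint X ∧ IsSelfAdjoint Y ∧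
      Complex.I • (X * V) - Complex.I • (V * Y) = E ∧ ‖X‖ ≤ 3 * ‖E‖ ∧ ‖Y‖ ≤ 2 * ‖E‖ := by
  have hnV : ‖V‖ ≤ 1 := pisom_norm_le_one V hV
  have hnsV : ‖star V‖ ≤ 1 := by rw [norm_star]; exact hnV
  obtain ⟨p, hp⟩ : ∃ x, x = V * star V := ⟨_, rfl⟩
  obtain ⟨q, hq⟩ : ∃ x, x = star V * V := ⟨_, rfl⟩
  obtain ⟨N, hN⟩ : ∃ x, x = A * V - V * B := ⟨_, rfl⟩
  have hEN : E = Complex.I • N := by rw [hN, smul_sub, h]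
  have hNE : ‖N‖ = ‖E‖ := by rw [hEN, norm_smul, Complex.norm_I, one_mul]
  have hpsa : IsSelfAdjoint p := by rw [IsSelfAdjoint, hp, star_mul, star_star]
  have hqsa : IsSelfAdjoint q := by rw [IsSelfAdjoint, hq, star_mul, star_star]
  have hp2 : p * p = p := by
    rw [hp]; calc V * star V * (V * star V) = V * star V * V * star V := by noncomm_ring
      _ = V * star V := by rw [hV]
  have hq2 : q * q = q := by
    rw [hq]; calc star V * V * (star V * V) = star V * (V * star V * V) := by noncomm_ring
      _ = star V * V := by rw [hV]
  have hpV : p * V = V := by rw [hp]; exact hV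
  have hVq : V * q = V := by rw [hq, ← mul_assoc, hV]
  have hsV : star V * p = star V := by
    rw [hp]
    calc star V * (V * star V) = star (V * star V * V) := by
          simp only [star_mul, star_star]; try noncomm_ring
      _ = star V := by rw [hV]
  have hqsV : q * star V = star V := by
    rw [hq]
    calc star V * V * star V = star (V * star V * V) := by
          simp only [star_mul, star_star]; try noncomm_ring
      _ = star V := by rw [hV]
  have h1pV : (1 - p) * V = 0 := by rw [sub_mul, one_mul, hpV, sub_self]
  have hV1q : V * (1 - q) = 0 := by rw [mul_sub, mul_one, hVq, sub_self]
  have hsN : star N = star V * A - B * star V := by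
    rw [hN, star_sub, star_mul, star_mul, hA.star_eq, hB.star_eq]
  have hkey : N * star V - V * star N = A * p - p * A := by
    rw [hsN, hN, hp]; noncomm_ring
  have hdiag : p * (N * star V) * p = p * (V * star N) * p := by
    have h0 : p * (N * star V - V * star N) * p = 0 := by
      rw [hkey]
      calc p * (A * p - p * A) * p = p * A * (p * p) - (p * p) * A * p := by noncomm_ring
        _ = 0 := by rw [hp2]; noncomm_ring
    have h1 : p * (N * star V) * p - p * (V * star N) * p = 0 := by
      rw [← h0]; noncomm_ring
    exact sub_eq_zero.mp h1
  have hDsa : IsSelfAdjoint (p * N * star V * p) := by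
    rw [IsSelfAdjoint]
    have h1 : star (p * N * star V * p) = p * (V * star N) * p := by
      simp only [star_mul, star_star, hpsa.star_eq]; noncomm_ring
    rw [h1, ← hdiag]; noncomm_ring
  obtain ⟨T, hT⟩ : ∃ x, x = (1 - p) * (N * star V) := ⟨_, rfl⟩
  obtain ⟨U, hU⟩ : ∃ x, x = star V * N * (1 - q) := ⟨_, rfl⟩
  have h1psa : IsSelfAdjoint (1 - p) := (IsSelfAdjoint.one _).sub hpsa
  have h1qsa : IsSelfAdjoint (1 - q) := (IsSelfAdjoint.one _).sub hqsa
  have hsT : star T = V * star N * (1 - p) := by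
    rw [hT]; simp only [star_mul, star_star, h1psa.star_eq]; try noncomm_ring
  have hsU : star U = (1 - q) * star N * V := by
    rw [hU]; simp only [star_mul, star_star, h1qsa.star_eq]; try noncomm_ring
  refine ⟨p * N * star V * p + (T + star T), -(U + star U), ?_, ?_, ?_, ?_, ?_⟩
  · exact hDsa.add (IsSelfAdjoint.add_star_self T)
  · exact (IsSelfAdjoint.add_star_self U).neg
  · -- the representation equation
    have hXV : (p * N * star V * p + (T + star T)) * V = N * q := by
      have e1 : p * N * star V * p * V = p * (N * q) := by
        rw [mul_assoc, hpV, ← mul_assoc, hq]; noncomm_ring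
      have e2 : T * V = (1 - p) * (N * q) := by
        rw [hT, hq]; noncomm_ring
      have e3 : star T * V = 0 := by
        rw [hsT, mul_assoc, h1pV, mul_zero]
      rw [add_mul, add_mul, e1, e2, e3, add_zero, ← add_mul]
      rw [show p + (1 - p) = 1 by abel, one_mul]
    have hVY : V * -(U + star U) = -(p * (N * (1 - q))) := by
      have e1 : V * U = p * (N * (1 - q)) := by
        rw [hU, hp]; noncomm_ring
      have e2 : V * star U = 0 := by
        rw [hsU, show V * ((1 - q) * star N * V) = (V * (1 - q)) * (star N * V) by noncomm_ring,
          hV1q, zero_mul]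
      rw [mul_neg, mul_add, e1, e2, add_zero]
    have hcorner : (1 - p) * N * (1 - q) = 0 := by
      have c1 : (1 - p) * N = (1 - p) * A * V := by
        rw [hN, mul_sub, show (1 - p) * (V * B) = ((1 - p) * V) * B by noncomm_ring, h1pV,
          zero_mul, sub_zero, mul_assoc]
      rw [c1, show (1 - p) * A * V * (1 - q) = (1 - p) * A * (V * (1 - q)) by noncomm_ring,
        hV1q, mul_zero]
    have hsum : (p * N * star V * p + (T + star T)) * V - V * -(U + star U) = N := by
      rw [hXV, hVY, sub_neg_eq_add]
      have : N - (N * q + p * (N * (1 - q))) = (1 - p) * N * (1 - q) := by noncomm_ring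
      have h2 := hcorner
      rw [← this] at h2
      linear_combination (norm := abel) -h2
    rw [← smul_sub, hsum, ← hEN]
  · -- ‖X‖ ≤ 3‖E‖
    have hnp : ‖p‖ ≤ 1 := proj_opNorm_le_one p hpsa hp2
    have hn1p : ‖1 - p‖ ≤ 1 := proj_opNorm_le_one _ h1psa
      (by rw [sub_mul, mul_sub, mul_sub, one_mul, mul_one, one_mul, hp2]; abel)
    have hnsN : ‖star N‖ = ‖N‖ := norm_star N
    have b1 : ‖p * N * star V * p‖ ≤ ‖N‖ := by
      calc ‖p * N * star V * p‖ ≤ ‖p * N * star V‖ * ‖p‖ := norm_mul_le _ _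
        _ ≤ (‖p * N‖ * ‖star V‖) * ‖p‖ := by
            apply mul_le_mul_of_nonneg_right (norm_mul_le _ _) (norm_nonneg _)
        _ ≤ ((‖p‖ * ‖N‖) * ‖star V‖) * ‖p‖ := by
            apply mul_le_mul_of_nonneg_right
              (mul_le_mul_of_nonneg_right (norm_mul_le _ _) (norm_nonneg _)) (norm_nonneg _)
        _ ≤ ‖N‖ := aux_mul4 (norm_nonneg p) (norm_nonneg N) (norm_nonneg (star V)) (norm_nonneg p) hnp hnsV hnp
    have b2 : ‖T‖ ≤ ‖N‖ := by
      calc ‖T‖ = ‖(1 - p) * (N * star V)‖ := by rw [hT]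
        _ ≤ ‖1 - p‖ * ‖N * star V‖ := norm_mul_le _ _
        _ ≤ ‖1 - p‖ * (‖N‖ * ‖star V‖) := by
            apply mul_le_mul_of_nonneg_left (norm_mul_le _ _) (norm_nonneg _)
        _ ≤ ‖N‖ := aux_mul3a (norm_nonneg (1 - p)) (norm_nonneg N) (norm_nonneg (star V)) hn1p hnsV
    have b3 : ‖star T‖ ≤ ‖N‖ := by rw [norm_star]; exact b2
    calc ‖p * N * star V * p + (T + star T)‖ ≤ ‖p * N * star V * p‖ + (‖T‖ + ‖star T‖) := by
          refine (norm_add_le _ _).trans ?_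
          exact add_le_add le_rfl (norm_add_le _ _)
      _ ≤ 3 * ‖E‖ := by rw [← hNE]; linarith
  · -- ‖Y‖ ≤ 2‖E‖
    have hn1q : ‖1 - q‖ ≤ 1 := proj_opNorm_le_one _ h1qsa
      (by rw [sub_mul, mul_sub, mul_sub, one_mul, mul_one, one_mul, hq2]; abel)
    have b1 : ‖U‖ ≤ ‖N‖ := by
      calc ‖U‖ = ‖star V * N * (1 - q)‖ := by rw [hU]
        _ ≤ ‖star V * N‖ * ‖1 - q‖ := norm_mul_le _ _
        _ ≤ (‖star V‖ * ‖N‖) * ‖1 - q‖ := by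
            apply mul_le_mul_of_nonneg_right (norm_mul_le _ _) (norm_nonneg _)
        _ ≤ ‖N‖ := aux_mul3b (norm_nonneg (star V)) (norm_nonneg N) (norm_nonneg (1 - q)) hnsV hn1q
    have b2 : ‖star U‖ ≤ ‖N‖ := by rw [norm_star]; exact b1
    calc ‖-(U + star U)‖ = ‖U + star U‖ := norm_neg _
      _ ≤ ‖U‖ + ‖star U‖ := norm_add_le _ _
      _ ≤ 2 * ‖E‖ := by rw [← hNE]; linarith

/-- The quotient Finsler norm of a tangent vector `W` at a partial isometry `V`:
`|W|_V = inf { max(‖A‖,‖B‖) : A,B selfadjoint, iAV − iVB = W }`. -/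
noncomputable def finslerNorm (V W : H →L[ℂ] H) : ℝ :=
  sInf { r : ℝ | ∃ A B : H →L[ℂ] H, IsSelfAdjoint A ∧ IsSelfAdjoint B ∧
    Complex.I • (A * V) - Complex.I • (V * B) = W ∧ r = max ‖A‖ ‖B‖ }

lemma finslerSet_bddBelow (V W : H →L[ℂ] H) :
    BddBelow { r : ℝ | ∃ A B : H →L[ℂ] H, IsSelfAdjoint A ∧ IsSelfAdjoint B ∧
      Complex.I • (A * V) - Complex.I • (V * B) = W ∧ r = max ‖A‖ ‖B‖ } := by
  refine ⟨0, ?_⟩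
  rintro r ⟨A, B, -, -, -, rfl⟩
  exact le_trans (norm_nonneg A) (le_max_left _ _)

lemma finslerNorm_nonneg (V W : H →L[ℂ] H) : 0 ≤ finslerNorm V W := by
  apply Real.sInf_nonneg
  rintro r ⟨A, B, -, -, -, rfl⟩
  exact le_trans (norm_nonneg A) (le_max_left _ _)

lemma finslerNorm_le (V W A B : H →L[ℂ] H) (hA : IsSelfAdjoint A) (hB : IsSelfAdjoint B)
    (h : Complex.I • (A * V) - Complex.I • (V * B) = W) :
    finslerNorm V W ≤ max ‖A‖ ‖B‖ :=
  csInf_le (finslerSet_bddBelow V W) ⟨A, B, hA, hB, h, rfl⟩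

/-- Key lower bound: `‖W V* + V W*‖ ≤ |W|_V` for a tangent vector at a partial isometry. -/
lemma norm_le_finslerNorm (V W : H →L[ℂ] H) (hV : V * star V * V = V)
    (hne : ∃ A B : H →L[ℂ] H, IsSelfAdjoint A ∧ IsSelfAdjoint B ∧
      Complex.I • (A * V) - Complex.I • (V * B) = W) :
    ‖W * star V + V * star W‖ ≤ finslerNorm V W := by
  apply le_csInf
  · obtain ⟨A, B, hA, hB, h⟩ := hne
    exact ⟨max ‖A‖ ‖B‖, A, B, hA, hB, h, rfl⟩
  · rintro r ⟨A, B, hA, hB, h, rfl⟩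
    rw [tangent_pform V A B W hA hB h]
    have hpsa : IsSelfAdjoint (V * star V) := by rw [IsSelfAdjoint, star_mul, star_star]
    have hp2 : (V * star V) * (V * star V) = V * star V := by
      calc V * star V * (V * star V) = V * star V * V * star V := by noncomm_ring
        _ = V * star V := by rw [hV]
    calc ‖Complex.I • (A * (V * star V) - V * star V * A)‖
        = ‖A * (V * star V) - V * star V * A‖ := by rw [norm_smul, Complex.norm_I, one_mul]
      _ ≤ ‖A‖ := commutator_proj_bound (V * star V) A hpsa hp2
      _ ≤ max ‖A‖ ‖B‖ := le_max_left _ _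

/-- Two-point comparison estimate for the Finsler norm along partial isometries. -/
lemma finsler_two_point (V V' W W' : H →L[ℂ] H) (hV' : V' * star V' * V' = V')
    (h1 : ∃ A B : H →L[ℂ] H, IsSelfAdjoint A ∧ IsSelfAdjoint B ∧
      Complex.I • (A * V) - Complex.I • (V * B) = W)
    (h2 : ∃ A B : H →L[ℂ] H, IsSelfAdjoint A ∧ IsSelfAdjoint B ∧
      Complex.I • (A * V') - Complex.I • (V' * B) = W')
    {ε : ℝ} (hε : 0 < ε) :
    finslerNorm V' W' ≤ finslerNorm V W + ε
      + 3 * (1 + 2 * (finslerNorm V W + ε)) * (‖W' - W‖ + ‖V' - V‖) := by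
  have hSne : { r : ℝ | ∃ A B : H →L[ℂ] H, IsSelfAdjoint A ∧ IsSelfAdjoint B ∧
      Complex.I • (A * V) - Complex.I • (V * B) = W ∧ r = max ‖A‖ ‖B‖ }.Nonempty := by
    obtain ⟨A, B, hA, hB, h⟩ := h1
    exact ⟨max ‖A‖ ‖B‖, A, B, hA, hB, h, rfl⟩
  obtain ⟨r, hrS, hrlt⟩ := Real.lt_sInf_add_pos hSne hε
  obtain ⟨A, B, hA, hB, hrep, rfl⟩ := hrS
  have hrlt2 : max ‖A‖ ‖B‖ < finslerNorm V W + ε := hrlt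
  obtain ⟨A', B', hA', hB', hrep'⟩ := h2
  -- the defect E
  obtain ⟨E, hE⟩ : ∃ x, x = W' - (Complex.I • (A * V') - Complex.I • (V' * B)) := ⟨_, rfl⟩
  have hEtan : Complex.I • ((A' - A) * V') - Complex.I • (V' * (B' - B)) = E := by
    rw [hE, ← hrep']
    simp only [sub_mul, mul_sub, smul_sub]
    abel
  obtain ⟨X, Y, hX, hY, hXY, hXn, hYn⟩ :=
    exists_small_rep V' E (A' - A) (B' - B) hV' (hA'.sub hA) (hB'.sub hB) hEtan
  have hrepW' : Complex.I • ((A + X) * V') - Complex.I • (V' * (B + Y)) = W' := by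
    rw [add_mul, mul_add, smul_add, smul_add]
    have : Complex.I • (A * V') + Complex.I • (X * V') -
        (Complex.I • (V' * B) + Complex.I • (V' * Y))
        = (Complex.I • (A * V') - Complex.I • (V' * B)) +
          (Complex.I • (X * V') - Complex.I • (V' * Y)) := by abel
    rw [this, hXY, hE]
    abel
  have hfle : finslerNorm V' W' ≤ max ‖A + X‖ ‖B + Y‖ :=
    finslerNorm_le V' W' (A + X) (B + Y) (hA.add hX) (hB.add hY) hrepW'
  have hEbound : ‖E‖ ≤ ‖W' - W‖ + (‖A‖ + ‖B‖) * ‖V' - V‖ := by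
    have hE2 : E = (W' - W) + (Complex.I • (A * (V - V')) - Complex.I • ((V - V') * B)) := by
      rw [hE, ← hrep]
      simp only [mul_sub, sub_mul, smul_sub]
      abel
    calc ‖E‖ = ‖(W' - W) + (Complex.I • (A * (V - V')) - Complex.I • ((V - V') * B))‖ := by
          rw [← hE2]
      _ ≤ ‖W' - W‖ + ‖Complex.I • (A * (V - V')) - Complex.I • ((V - V') * B)‖ :=
          norm_add_le _ _
      _ ≤ ‖W' - W‖ + (‖Complex.I • (A * (V - V'))‖ + ‖Complex.I • ((V - V') * B)‖) := by
          gcongr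
          exact norm_sub_le _ _
      _ ≤ ‖W' - W‖ + (‖A‖ * ‖V - V'‖ + ‖V - V'‖ * ‖B‖) := by
          gcongr
          · rw [norm_smul, Complex.norm_I, one_mul]; exact norm_mul_le _ _
          · rw [norm_smul, Complex.norm_I, one_mul]; exact norm_mul_le _ _
      _ = ‖W' - W‖ + (‖A‖ * ‖V' - V‖ + ‖V' - V‖ * ‖B‖) := by rw [norm_sub_rev V V']
      _ = ‖W' - W‖ + (‖A‖ + ‖B‖) * ‖V' - V‖ := by ring
  have hAr : ‖A‖ ≤ max ‖A‖ ‖B‖ := le_max_left _ _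
  have hBr : ‖B‖ ≤ max ‖A‖ ‖B‖ := le_max_right _ _
  have hmax : max ‖A + X‖ ‖B + Y‖ ≤ max ‖A‖ ‖B‖ + 3 * ‖E‖ := by
    apply max_le
    · calc ‖A + X‖ ≤ ‖A‖ + ‖X‖ := norm_add_le _ _
        _ ≤ max ‖A‖ ‖B‖ + 3 * ‖E‖ := add_le_add hAr hXn
    · calc ‖B + Y‖ ≤ ‖B‖ + ‖Y‖ := norm_add_le _ _
        _ ≤ max ‖A‖ ‖B‖ + 3 * ‖E‖ := by
          have : ‖Y‖ ≤ 3 * ‖E‖ := le_trans hYn (by nlinarith [norm_nonneg E])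
          exact add_le_add hBr this
  have hf0 : 0 ≤ finslerNorm V W := finslerNorm_nonneg V W
  have hEn : 0 ≤ ‖E‖ := norm_nonneg E
  have hWn : 0 ≤ ‖W' - W‖ := norm_nonneg _
  have hVn : 0 ≤ ‖V' - V‖ := norm_nonneg _
  have hErf : ‖E‖ ≤ ‖W' - W‖ + 2 * (finslerNorm V W + ε) * ‖V' - V‖ := by
    have hA2 : ‖A‖ ≤ finslerNorm V W + ε := le_of_lt (lt_of_le_of_lt hAr hrlt2)
    have hB2 : ‖B‖ ≤ finslerNorm V W + ε := le_of_lt (lt_of_le_of_lt hBr hrlt2)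
    nlinarith
  calc finslerNorm V' W' ≤ max ‖A‖ ‖B‖ + 3 * ‖E‖ := le_trans hfle hmax
    _ ≤ (finslerNorm V W + ε) + 3 * ‖E‖ := by nlinarith [hrlt2]
    _ ≤ finslerNorm V W + ε + 3 * (1 + 2 * (finslerNorm V W + ε)) * (‖W' - W‖ + ‖V' - V‖) := by
        nlinarith

lemma finsler_continuousOn {s : Set ℝ} (γ γ' : ℝ → H →L[ℂ] H)
    (hγ : ContinuousOn γ s) (hγ' : ContinuousOn γ' s)
    (hpiso : ∀ t ∈ s, γ t * star (γ t) * γ t = γ t)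
    (htan : ∀ t ∈ s, ∃ A B : H →L[ℂ] H, IsSelfAdjoint A ∧ IsSelfAdjoint B ∧
      γ' t = Complex.I • (A * γ t) - Complex.I • (γ t * B)) :
    ContinuousOn (fun t => finslerNorm (γ t) (γ' t)) s := by
  intro t₀ ht₀
  rw [Metric.continuousWithinAt_iff]
  intro ε hε
  obtain ⟨f₀, hf₀⟩ : ∃ x, x = finslerNorm (γ t₀) (γ' t₀) := ⟨_, rfl⟩
  have hf₀0 : 0 ≤ f₀ := hf₀ ▸ finslerNorm_nonneg _ _
  obtain ⟨C, hC⟩ : ∃ x, x = 3 * (1 + 2 * (f₀ + ε)) := ⟨_, rfl⟩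
  have hCpos : 0 < C := by rw [hC]; nlinarith
  obtain ⟨κ, hκ⟩ : ∃ x, x = (ε / 4) / C := ⟨_, rfl⟩
  have hκpos : 0 < κ := by rw [hκ]; positivity
  have hCκ : C * κ ≤ ε / 4 := by
    rw [hκ]
    rw [mul_div_assoc', mul_comm, ← mul_div_assoc', div_self (ne_of_gt hCpos), mul_one]
  -- neighborhoods from continuity of γ and γ'
  obtain ⟨δ₁, hδ₁pos, hδ₁⟩ := Metric.continuousWithinAt_iff.mp (hγ t₀ ht₀) (κ / 2)
    (by positivity)
  obtain ⟨δ₂, hδ₂pos, hδ₂⟩ := Metric.continuousWithinAt_iff.mp (hγ' t₀ ht₀) (κ / 2)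
    (by positivity)
  refine ⟨min δ₁ δ₂, lt_min hδ₁pos hδ₂pos, ?_⟩
  intro t ht hdist
  have hd1 : ‖γ t - γ t₀‖ < κ / 2 := by
    rw [← dist_eq_norm]
    exact hδ₁ ht (lt_of_lt_of_le hdist (min_le_left _ _))
  have hd2 : ‖γ' t - γ' t₀‖ < κ / 2 := by
    rw [← dist_eq_norm]
    exact hδ₂ ht (lt_of_lt_of_le hdist (min_le_right _ _))
  have hM : ‖γ' t - γ' t₀‖ + ‖γ t - γ t₀‖ < κ := by linarith
  have hM0 : 0 ≤ ‖γ' t - γ' t₀‖ + ‖γ t - γ t₀‖ := by positivity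
  have htan₀ : ∃ A B : H →L[ℂ] H, IsSelfAdjoint A ∧ IsSelfAdjoint B ∧
      Complex.I • (A * γ t₀) - Complex.I • (γ t₀ * B) = γ' t₀ := by
    obtain ⟨A, B, hA, hB, h⟩ := htan t₀ ht₀; exact ⟨A, B, hA, hB, h.symm⟩
  have htant : ∃ A B : H →L[ℂ] H, IsSelfAdjoint A ∧ IsSelfAdjoint B ∧
      Complex.I • (A * γ t) - Complex.I • (γ t * B) = γ' t := by
    obtain ⟨A, B, hA, hB, h⟩ := htan t ht; exact ⟨A, B, hA, hB, h.symm⟩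
  have hε4 : (0:ℝ) < ε / 4 := by positivity
  -- forward estimate
  have hfwd : finslerNorm (γ t) (γ' t) ≤ f₀ + ε / 2 := by
    have h2p := finsler_two_point (γ t₀) (γ t) (γ' t₀) (γ' t) (hpiso t ht) htan₀ htant hε4
    rw [← hf₀] at h2p
    have hcoef : 3 * (1 + 2 * (f₀ + ε / 4)) ≤ C := by rw [hC]; nlinarith
    have : 3 * (1 + 2 * (f₀ + ε / 4)) * (‖γ' t - γ' t₀‖ + ‖γ t - γ t₀‖) ≤ ε / 4 := by
      calc 3 * (1 + 2 * (f₀ + ε / 4)) * (‖γ' t - γ' t₀‖ + ‖γ t - γ t₀‖)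
          ≤ C * κ := by
            apply mul_le_mul hcoef (le_of_lt hM) hM0 (le_of_lt hCpos)
        _ ≤ ε / 4 := hCκ
    linarith
  -- backward estimate
  have hbwd : f₀ ≤ finslerNorm (γ t) (γ' t) + ε / 2 := by
    have h2p := finsler_two_point (γ t) (γ t₀) (γ' t) (γ' t₀) (hpiso t₀ ht₀) htant htan₀ hε4
    rw [← hf₀] at h2p
    have hgt0 : 0 ≤ finslerNorm (γ t) (γ' t) := finslerNorm_nonneg _ _
    have hcoef : 3 * (1 + 2 * (finslerNorm (γ t) (γ' t) + ε / 4)) ≤ C := by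
      rw [hC]; nlinarith [hfwd]
    have hMrev : ‖γ' t₀ - γ' t‖ + ‖γ t₀ - γ t‖ < κ := by
      rw [norm_sub_rev (γ' t₀), norm_sub_rev (γ t₀)]; exact hM
    have hMrev0 : 0 ≤ ‖γ' t₀ - γ' t‖ + ‖γ t₀ - γ t‖ := by positivity
    have : 3 * (1 + 2 * (finslerNorm (γ t) (γ' t) + ε / 4)) * (‖γ' t₀ - γ' t‖ + ‖γ t₀ - γ t‖)
        ≤ ε / 4 := by
      calc 3 * (1 + 2 * (finslerNorm (γ t) (γ' t) + ε / 4)) * (‖γ' t₀ - γ' t‖ + ‖γ t₀ - γ t‖)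
          ≤ C * κ := mul_le_mul hcoef (le_of_lt hMrev) hMrev0 (le_of_lt hCpos)
        _ ≤ ε / 4 := hCκ
    linarith
  rw [Real.dist_eq, ← hf₀, abs_sub_lt_iff]
  constructor <;> linarith

lemma delta_finsler_eq (P₀ Z : H →L[ℂ] H)
    (hP₀sa : IsSelfAdjoint P₀) (hP₀2 : P₀ * P₀ = P₀) (hZ : IsSelfAdjoint Z)
    (hZcod : P₀ * Z * P₀ = 0 ∧ (1 - P₀) * Z * (1 - P₀) = 0)
    (δ : ℝ → H →L[ℂ] H)
    (hδ : ∀ t : ℝ, δ t =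
      exp ((Complex.I * (t : ℂ)) • Z) * P₀ * exp ((-(Complex.I * (t : ℂ))) • Z))
    (t : ℝ) :
    finslerNorm (δ t) (Complex.I • (Z * δ t - δ t * Z))
      = ‖Complex.I • (Z * δ t - δ t * Z)‖ := by
  obtain ⟨u, hu⟩ : ∃ x, x = exp ((Complex.I * (t : ℂ)) • Z) := ⟨_, rfl⟩
  obtain ⟨v, hv⟩ : ∃ x, x = exp ((-(Complex.I * (t : ℂ))) • Z) := ⟨_, rfl⟩
  have hδt : δ t = u * P₀ * v := by rw [hδ t, hu, hv]
  have hcomm : Commute ((Complex.I * (t : ℂ)) • Z) ((-(Complex.I * (t : ℂ))) • Z) :=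
    ((Commute.refl Z).smul_left _).smul_right _
  have huv : u * v = 1 := by
    rw [hu, hv, ← exp_add_of_commute_of_mem_ball (𝕂 := ℂ) hcomm ((expSeries_radius_eq_top ℂ (H →L[ℂ] H)).symm ▸ edist_lt_top _ _) ((expSeries_radius_eq_top ℂ (H →L[ℂ] H)).symm ▸ edist_lt_top _ _), ← add_smul, add_neg_cancel, zero_smul, exp_zero]
  have hvu : v * u = 1 := by
    rw [hu, hv, ← exp_add_of_commute_of_mem_ball (𝕂 := ℂ) hcomm.symm ((expSeries_radius_eq_top ℂ (H →L[ℂ] H)).symm ▸ edist_lt_top _ _) ((expSeries_radius_eq_top ℂ (H →L[ℂ] H)).symm ▸ edist_lt_top _ _), ← add_smul, neg_add_cancel, zero_smul, exp_zero]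
  have hZu : Z * u = u * Z := by
    rw [hu]; exact ((Commute.refl Z).smul_right _).exp_right
  have hZv : Z * v = v * Z := by
    rw [hv]; exact ((Commute.refl Z).smul_right _).exp_right
  have hsu : star u = v := by
    rw [hu, hv, star_exp, star_smul, hZ.star_eq]
    congr 1
    simp [Complex.star_def, map_mul, Complex.conj_I, Complex.conj_ofReal]
  have hsv : star v = u := by rw [← hsu, star_star]
  -- δ t is an orthogonal projection
  have hδsa : IsSelfAdjoint (δ t) := by
    rw [IsSelfAdjoint, hδt]
    simp only [star_mul, hsu, hsv, hP₀sa.star_eq]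
    noncomm_ring
  have hconj : ∀ M M' : H →L[ℂ] H, (u * M * v) * (u * M' * v) = u * (M * M') * v := by
    intro M M'
    calc (u * M * v) * (u * M' * v) = u * M * (v * u) * (M' * v) := by noncomm_ring
      _ = u * (M * M') * v := by rw [hvu]; noncomm_ring
  have hδ2 : δ t * δ t = δ t := by
    rw [hδt, hconj, hP₀2]
  -- transport of Z and the commutator
  have hZconj : u * Z * v = Z := by
    rw [← hZu, mul_assoc, huv, mul_one]
  have hCconj : Z * δ t - δ t * Z = u * (Z * P₀ - P₀ * Z) * v := by
    have h1 : Z * δ t = u * (Z * P₀) * v := by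
      rw [hδt]
      calc Z * (u * P₀ * v) = Z * u * (P₀ * v) := by noncomm_ring
        _ = u * Z * (P₀ * v) := by rw [hZu]
        _ = u * (Z * P₀) * v := by noncomm_ring
    have h2 : δ t * Z = u * (P₀ * Z) * v := by
      rw [hδt]
      calc u * P₀ * v * Z = u * P₀ * (v * Z) := by noncomm_ring
        _ = u * P₀ * (Z * v) := by rw [hZv]
        _ = u * (P₀ * Z) * v := by noncomm_ring
    rw [h1, h2]; noncomm_ring
  -- codiagonality: Z = Z P₀ + P₀ Z
  have hZP : Z = Z * P₀ + P₀ * Z := by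
    have h0 : Z - Z * P₀ - P₀ * Z + P₀ * Z * P₀ = 0 := by
      calc Z - Z * P₀ - P₀ * Z + P₀ * Z * P₀ = (1 - P₀) * Z * (1 - P₀) := by noncomm_ring
        _ = 0 := hZcod.2
    rw [hZcod.1, add_zero, sub_sub] at h0
    exact sub_eq_zero.mp h0
  have hbase : (1 - 2 • P₀) * (Z * P₀ - P₀ * Z) = Z := by
    have e : (1 - 2 • P₀) * (Z * P₀ - P₀ * Z)
        = Z * P₀ - P₀ * Z - 2 • (P₀ * Z * P₀) + 2 • (P₀ * P₀ * Z) := by noncomm_ring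
    rw [e, hP₀2, hZcod.1, smul_zero, sub_zero]
    conv_rhs => rw [hZP]
    rw [two_smul]
    abel
  have hkey : (1 - 2 • δ t) * (Z * δ t - δ t * Z) = Z := by
    have h3 : (1 : H →L[ℂ] H) - 2 • δ t = u * (1 - 2 • P₀) * v := by
      have : u * (1 - 2 • P₀) * v = u * v - 2 • (u * P₀ * v) := by noncomm_ring
      rw [this, huv, hδt]
    rw [h3, hCconj, hconj, hbase, hZconj]
  -- the two norm inequalities
  have hn1 : ‖Z * δ t - δ t * Z‖ ≤ ‖Z‖ := commutator_proj_bound (δ t) Z hδsa hδ2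
  have hSsa : IsSelfAdjoint ((1 : H →L[ℂ] H) - 2 • δ t) := by
    rw [IsSelfAdjoint, star_sub, star_one, star_smul, hδsa.star_eq]
    norm_num
  have hSS : ((1 : H →L[ℂ] H) - 2 • δ t) * (1 - 2 • δ t) = 1 := by
    have e : ((1 : H →L[ℂ] H) - 2 • δ t) * (1 - 2 • δ t)
        = 1 - 4 • δ t + 4 • (δ t * δ t) := by noncomm_ring
    rw [e, hδ2]
    abel
  have hSiso : ∀ y : H, ‖((1 : H →L[ℂ] H) - 2 • δ t) y‖ = ‖y‖ := by
    intro y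
    obtain ⟨S, hS⟩ : ∃ x, x = (1 : H →L[ℂ] H) - 2 • δ t := ⟨_, rfl⟩
    have hSsa' : IsSelfAdjoint S := by rw [hS]; exact hSsa
    rw [← hS]
    have h1 : (inner ℂ (S y) (S y) : ℂ) = inner ℂ y y := by
      have e := inner_proj_right S hSsa' y (S y)
      rw [← e, ← ContinuousLinearMap.mul_apply, hS, hSS, ContinuousLinearMap.one_apply]
    have h2 : ‖S y‖ ^ 2 = ‖y‖ ^ 2 := by
      have := congrArg RCLike.re h1
      rwa [inner_self_eq_norm_sq (𝕜 := ℂ), inner_self_eq_norm_sq (𝕜 := ℂ)] at this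
    exact (sq_eq_sq₀ (norm_nonneg _) (norm_nonneg _)).mp h2
  have hn2 : ‖Z‖ ≤ ‖Z * δ t - δ t * Z‖ := by
    apply ContinuousLinearMap.opNorm_le_bound _ (norm_nonneg _)
    intro x
    have hzx : Z x = ((1 : H →L[ℂ] H) - 2 • δ t) ((Z * δ t - δ t * Z) x) := by
      rw [← ContinuousLinearMap.mul_apply, hkey]
    rw [hzx, hSiso]
    exact (Z * δ t - δ t * Z).le_opNorm x
  have hnC : ‖Z * δ t - δ t * Z‖ = ‖Z‖ := le_antisymm hn1 hn2
  have hnW : ‖Complex.I • (Z * δ t - δ t * Z)‖ = ‖Z‖ := by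
    rw [norm_smul, Complex.norm_I, one_mul, hnC]
  -- the (Z, Z) representation
  have hrepZ : Complex.I • (Z * δ t) - Complex.I • (δ t * Z)
      = Complex.I • (Z * δ t - δ t * Z) := by rw [smul_sub]
  -- upper bound
  have hupper : finslerNorm (δ t) (Complex.I • (Z * δ t - δ t * Z))
      ≤ ‖Complex.I • (Z * δ t - δ t * Z)‖ := by
    rw [hnW]
    have := finslerNorm_le (δ t) (Complex.I • (Z * δ t - δ t * Z)) Z Z hZ hZ hrepZ
    rwa [max_self] at this
  -- lower bound
  have hδpiso : δ t * star (δ t) * δ t = δ t := by rw [hδsa.star_eq, hδ2, hδ2]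
  have hWsa : star (Complex.I • (Z * δ t - δ t * Z)) = Complex.I • (Z * δ t - δ t * Z) := by
    rw [star_smul, star_sub, star_mul, star_mul, hZ.star_eq, hδsa.star_eq, Complex.star_def,
      Complex.conj_I, neg_smul, ← smul_neg]
    congr 1
    abel
  have hWform : (Complex.I • (Z * δ t - δ t * Z)) * star (δ t)
      + δ t * star (Complex.I • (Z * δ t - δ t * Z)) = Complex.I • (Z * δ t - δ t * Z) := by
    rw [hWsa, hδsa.star_eq, smul_mul_assoc, mul_smul_comm, ← smul_add]
    congr 1
    calc (Z * δ t - δ t * Z) * δ t + δ t * (Z * δ t - δ t * Z)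
        = Z * (δ t * δ t) - (δ t * δ t) * Z := by noncomm_ring
      _ = Z * δ t - δ t * Z := by rw [hδ2]
  have hlower : ‖Complex.I • (Z * δ t - δ t * Z)‖
      ≤ finslerNorm (δ t) (Complex.I • (Z * δ t - δ t * Z)) := by
    have := norm_le_finslerNorm (δ t) (Complex.I • (Z * δ t - δ t * Z)) hδpiso
      ⟨Z, Z, hZ, hZ, hrepZ⟩
    rwa [hWform] at this
  exact le_antisymm hupper hlower

/-- Let `P₀`, `P₁` be orthogonal projections, `Z` selfadjoint and
`P₀`-codiagonal, and `δ(t) = e^{itZ} P₀ e^{−itZ}`, `t ∈ [0,1]`, with `δ(1) = P₁`.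
If `δ` is minimal (for operator-norm length) among `C¹` curves of orthogonal projections
joining `P₀` and `P₁`, then `δ` is also minimal, for the quotient Finsler length, among
`C¹` curves of partial isometries joining `P₀` and `P₁`. -/
theorem projection_geodesic_minimal_among_partial_isometries
    (P₀ P₁ Z : H →L[ℂ] H)
    (hP₀sa : IsSelfAdjoint P₀) (hP₀2 : P₀ * P₀ = P₀)
    (hP₁sa : IsSelfAdjoint P₁) (hP₁2 : P₁ * P₁ = P₁)
    (hZ : IsSelfAdjoint Z)
    (hZcod : P₀ * Z * P₀ = 0 ∧ (1 - P₀) * Z * (1 - P₀) = 0)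
    (δ : ℝ → H →L[ℂ] H)
    (hδ : ∀ t : ℝ, δ t =
      exp ((Complex.I * (t : ℂ)) • Z) * P₀ * exp ((-(Complex.I * (t : ℂ))) • Z))
    (hδ1 : δ 1 = P₁)
    (hδmin : ∀ (a b : ℝ) (ρ ρ' : ℝ → H →L[ℂ] H), a ≤ b →
      (∀ t ∈ Icc a b, HasDerivWithinAt ρ (ρ' t) (Icc a b) t) →
      ContinuousOn ρ' (Icc a b) →
      (∀ t ∈ Icc a b, IsSelfAdjoint (ρ t) ∧ ρ t * ρ t = ρ t) →
      ρ a = P₀ → ρ b = P₁ →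
      (∫ t in (0:ℝ)..1, ‖Complex.I • (Z * δ t - δ t * Z)‖) ≤ ∫ t in a..b, ‖ρ' t‖) :
    ∀ (a b : ℝ) (γ γ' : ℝ → H →L[ℂ] H), a ≤ b →
      (∀ t ∈ Icc a b, HasDerivWithinAt γ (γ' t) (Icc a b) t) →
      ContinuousOn γ' (Icc a b) →
      (∀ t ∈ Icc a b, γ t * star (γ t) * γ t = γ t) →
      (∀ t ∈ Icc a b, ∃ A B : H →L[ℂ] H, IsSelfAdjoint A ∧ IsSelfAdjoint B ∧
        γ' t = Complex.I • (A * γ t) - Complex.I • (γ t * B)) →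
      γ a = P₀ → γ b = P₁ →
      (∫ t in (0:ℝ)..1, finslerNorm (δ t) (Complex.I • (Z * δ t - δ t * Z))) ≤
        ∫ t in a..b, finslerNorm (γ t) (γ' t) := by
  intro a b γ γ' hab hderiv hcont hpiso htan hga hgb
  -- the projection curve ρ = γ γ*
  obtain ⟨ρ, hρ⟩ : ∃ x, x = fun t => γ t * star (γ t) := ⟨_, rfl⟩
  obtain ⟨ρ', hρ'⟩ : ∃ x, x = fun t => γ' t * star (γ t) + γ t * star (γ' t) := ⟨_, rfl⟩
  have hγcont : ContinuousOn γ (Icc a b) := fun t ht => (hderiv t ht).continuousWithinAt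
  have hρderiv : ∀ t ∈ Icc a b, HasDerivWithinAt ρ (ρ' t) (Icc a b) t := by
    intro t ht
    rw [hρ, hρ']
    exact (hderiv t ht).mul (hderiv t ht).star
  have hρ'cont : ContinuousOn ρ' (Icc a b) := by
    rw [hρ']
    exact (hcont.mul hγcont.star).add (hγcont.mul hcont.star)
  have hρproj : ∀ t ∈ Icc a b, IsSelfAdjoint (ρ t) ∧ ρ t * ρ t = ρ t := by
    intro t ht
    rw [hρ]
    constructor
    · rw [IsSelfAdjoint, star_mul, star_star]
    · calc γ t * star (γ t) * (γ t * star (γ t)) = γ t * star (γ t) * γ t * star (γ t) := by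
            noncomm_ring
        _ = γ t * star (γ t) := by rw [hpiso t ht]
  have hρa : ρ a = P₀ := by rw [hρ]; simp only; rw [hga, hP₀sa.star_eq, hP₀2]
  have hρb : ρ b = P₁ := by rw [hρ]; simp only; rw [hgb, hP₁sa.star_eq, hP₁2]
  have hmin := hδmin a b ρ ρ' hab hρderiv hρ'cont hρproj hρa hρb
  -- pointwise: ‖ρ' t‖ ≤ finslerNorm (γ t) (γ' t)
  have hptwise : ∀ t ∈ Icc a b, ‖ρ' t‖ ≤ finslerNorm (γ t) (γ' t) := by
    intro t ht
    unfold finslerNorm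
    apply le_csInf
    · obtain ⟨A, B, hA, hB, h⟩ := htan t ht
      exact ⟨max ‖A‖ ‖B‖, A, B, hA, hB, h.symm, rfl⟩
    · rintro r ⟨A, B, hA, hB, hrep, rfl⟩
      have hform := tangent_pform (γ t) A B (γ' t) hA hB hrep
      have hpsa : IsSelfAdjoint (γ t * star (γ t)) := by
        rw [IsSelfAdjoint, star_mul, star_star]
      have hp2 : (γ t * star (γ t)) * (γ t * star (γ t)) = γ t * star (γ t) := by
        calc γ t * star (γ t) * (γ t * star (γ t)) = γ t * star (γ t) * γ t * star (γ t) := by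
              noncomm_ring
          _ = γ t * star (γ t) := by rw [hpiso t ht]
      calc ‖ρ' t‖ = ‖γ' t * star (γ t) + γ t * star (γ' t)‖ := by rw [hρ']
        _ = ‖Complex.I • (A * (γ t * star (γ t)) - γ t * star (γ t) * A)‖ := by rw [hform]
        _ = ‖A * (γ t * star (γ t)) - γ t * star (γ t) * A‖ := by
            rw [norm_smul, Complex.norm_I, one_mul]
        _ ≤ ‖A‖ := commutator_proj_bound _ A hpsa hp2
        _ ≤ max ‖A‖ ‖B‖ := le_max_left _ _
  -- continuity hence integrability of the Finsler integrand
  have hfinslercont : ContinuousOn (fun t => finslerNorm (γ t) (γ' t)) (Icc a b) :=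
    finsler_continuousOn γ γ' hγcont hcont hpiso htan
  have hint1 : IntervalIntegrable (fun t => ‖ρ' t‖) MeasureTheory.volume a b := by
    apply ContinuousOn.intervalIntegrable
    rw [Set.uIcc_of_le hab]
    exact hρ'cont.norm
  have hint2 : IntervalIntegrable (fun t => finslerNorm (γ t) (γ' t)) MeasureTheory.volume a b := by
    apply ContinuousOn.intervalIntegrable
    rw [Set.uIcc_of_le hab]
    exact hfinslercont
  calc (∫ t in (0:ℝ)..1, finslerNorm (δ t) (Complex.I • (Z * δ t - δ t * Z)))
      = ∫ t in (0:ℝ)..1, ‖Complex.I • (Z * δ t - δ t * Z)‖ := by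
        apply intervalIntegral.integral_congr
        intro t _
        exact delta_finsler_eq P₀ Z hP₀sa hP₀2 hZ hZcod δ hδ t
    _ ≤ ∫ t in a..b, ‖ρ' t‖ := hmin
    _ ≤ ∫ t in a..b, finslerNorm (γ t) (γ' t) :=
        intervalIntegral.integral_mono_on hab hint1 hint2 hptwise
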